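/- arXiv:1111.6094 — 3 statements merged into one kernel-verified Lean document; each statement's English description precedes it below -/
import Mathlib

section
/- Let P be a q-positive subset of an SSD space B. Then P is premaximally q-positive if and only if either Φ_P(b) ≥ q(b) for all b ∈ B, or P^π is an affine subset of B (i.e. x, y ∈ P^π and λ ∈ ℝ imply λx + (1 − λ)y ∈ P^π). -/
noncomputable section

variable {B : Type*} [AddCommGroup B] [Module ℝ B]

/-- The quadratic form `q(x) = ½⌊x,x⌋` associated to the bilinear form `br`. -/
def qQ (br : B →ₗ[ℝ] B →ₗ[ℝ] ℝ) (x : B) : ℝ := (1 / 2) * br x x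

/-- `A` is `q`-positive: nonempty and `q(b - c) ≥ 0` for all `b, c ∈ A`. -/
def IsQPositive (br : B →ₗ[ℝ] B →ₗ[ℝ] ℝ) (A : Set B) : Prop :=
  A.Nonempty ∧ ∀ b ∈ A, ∀ c ∈ A, 0 ≤ qQ br (b - c)

/-- `A^π`, the set of points `q`-positively related to `A`. -/
def qPi (br : B →ₗ[ℝ] B →ₗ[ℝ] ℝ) (A : Set B) : Set B :=
  {b : B | ∀ a ∈ A, 0 ≤ qQ br (b - a)}

/-- `A` is maximally `q`-positive. -/
def IsMaxQPositive (br : B →ₗ[ℝ] B →ₗ[ℝ] ℝ) (A : Set B) : Prop :=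
  IsQPositive br A ∧ ∀ C : Set B, IsQPositive br C → A ⊆ C → C = A

/-- The generalized Fitzpatrick function `Φ_A(x) = sup_{a ∈ A} (⌊x,a⌋ - q(a))`. -/
def PhiF (br : B →ₗ[ℝ] B →ₗ[ℝ] ℝ) (A : Set B) (x : B) : EReal :=
  ⨆ a ∈ A, ((br x a - qQ br a : ℝ) : EReal)

/-- The intrinsic conjugate `f^@(b) = sup_{c ∈ B} (⌊c,b⌋ - f(c))`. -/
def intrinsicConj (br : B →ₗ[ℝ] B →ₗ[ℝ] ℝ) (f : B → EReal) (b : B) : EReal :=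
  ⨆ c : B, ((br c b : ℝ) : EReal) - f c

/-- `P_q(f) = {b : f(b) = q(b)}`. -/
def PqSet (br : B →ₗ[ℝ] B →ₗ[ℝ] ℝ) (f : B → EReal) : Set B :=
  {b : B | f b = ((qQ br b : ℝ) : EReal)}

/-- `G_f = {b : f(b) + f^@(b) = ⌊b,b⌋}`. -/
def GSet (br : B →ₗ[ℝ] B →ₗ[ℝ] ℝ) (f : B → EReal) : Set B :=
  {b : B | f b + intrinsicConj br f b = ((br b b : ℝ) : EReal)}

/-- Convexity for `ℝ ∪ {+∞}`-valued functions. -/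
def ConvexE (f : B → EReal) : Prop :=
  ∀ x y : B, ∀ α β : ℝ, 0 ≤ α → 0 ≤ β → α + β = 1 →
    f (α • x + β • y) ≤ (α : EReal) * f x + (β : EReal) * f y

/-- The weak topology `w(B,B)` induced by the functionals `⌊·,b⌋`, `b ∈ B`. -/
def weakTop (br : B →ₗ[ℝ] B →ₗ[ℝ] ℝ) : TopologicalSpace B :=
  ⨅ b : B, TopologicalSpace.induced (fun x => br x b) inferInstance

/-- Lower semicontinuity with respect to the weak topology `w(B,B)`. -/
def LscW (br : B →ₗ[ℝ] B →ₗ[ℝ] ℝ) (f : B → EReal) : Prop :=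
  @LowerSemicontinuous B EReal (weakTop br) _ f

/-- `A` is `q`-representable: it has a `w(B,B)`-lsc proper convex `q`-representation. -/
def IsQRepresentable (br : B →ₗ[ℝ] B →ₗ[ℝ] ℝ) (A : Set B) : Prop :=
  ∃ f : B → EReal, LscW br f ∧ ConvexE f ∧ (∃ x, f x ≠ ⊤) ∧
    (∀ x, ((qQ br x : ℝ) : EReal) ≤ f x) ∧ PqSet br f = A


namespace Stmt17Aux

variable (br : B →ₗ[ℝ] B →ₗ[ℝ] ℝ)

lemma qq_flip (u v : B) : qQ br (u - v) = qQ br (v - u) := by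
  unfold qQ
  simp only [map_sub, LinearMap.sub_apply]
  ring

lemma qq_sub (hsym : ∀ x y : B, br x y = br y x) (u v : B) :
    qQ br (u - v) = qQ br u + qQ br v - br u v := by
  unfold qQ
  simp only [map_sub, LinearMap.sub_apply]
  rw [hsym v u]; ring

lemma qq_add (hsym : ∀ x y : B, br x y = br y x) (u v : B) :
    qQ br (u + v) = qQ br u + qQ br v + br u v := by
  unfold qQ
  simp only [map_add, LinearMap.add_apply]
  rw [hsym v u]; ring

lemma qq_smul (c : ℝ) (v : B) : qQ br (c • v) = c ^ 2 * qQ br v := by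
  unfold qQ
  simp only [map_smul, LinearMap.smul_apply, smul_eq_mul]
  ring

lemma qq_add_smul (hsym : ∀ x y : B, br x y = br y x) (u v : B) (c : ℝ) :
    qQ br (u + c • v) = qQ br u + c * br u v + c ^ 2 * qQ br v := by
  unfold qQ
  simp only [map_add, map_smul, LinearMap.add_apply, LinearMap.smul_apply, smul_eq_mul]
  rw [hsym v u]; ring

lemma subset_pi_self {P : Set B} (hP : IsQPositive br P) : P ⊆ qPi br P :=
  fun a ha a' ha' => hP.2 a ha a' ha'

/-- Zorn: every q-positive set is contained in a maximal one. -/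
lemma exists_max {A : Set B} (hA : IsQPositive br A) :
    ∃ M, IsMaxQPositive br M ∧ A ⊆ M := by
  have hchainub : ∀ c ⊆ {C | IsQPositive br C ∧ A ⊆ C}, IsChain (fun x1 x2 => x1 ⊆ x2) c →
      c.Nonempty → ∃ ub ∈ {C | IsQPositive br C ∧ A ⊆ C}, ∀ s ∈ c, s ⊆ ub := by
    intro c hc hchain hcne
    refine ⟨⋃₀ c, ⟨⟨?_, ?_⟩, ?_⟩, fun s hs => Set.subset_sUnion_of_mem hs⟩
    · obtain ⟨C, hC⟩ := hcne
      exact ((hc hC).1.1).mono (Set.subset_sUnion_of_mem hC)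
    · rintro b ⟨C1, hC1, hb⟩ cc ⟨C2, hC2, hcc⟩
      rcases hchain.total hC1 hC2 with h | h
      · exact (hc hC2).1.2 b (h hb) cc hcc
      · exact (hc hC1).1.2 b hb cc (h hcc)
    · obtain ⟨C, hC⟩ := hcne
      exact (hc hC).2.trans (Set.subset_sUnion_of_mem hC)
  obtain ⟨m, hAm, hm⟩ := zorn_subset_nonempty {C | IsQPositive br C ∧ A ⊆ C} hchainub A ⟨hA, subset_rfl⟩
  refine ⟨m, ⟨hm.prop.1, ?_⟩, hm.prop.2⟩
  intro C hC hmC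
  exact Set.Subset.antisymm (hm.2 ⟨hC, hm.prop.2.trans hmC⟩ hmC) hmC

lemma pi_qpos_premax {P : Set B} (hP : IsQPositive br P)
    (hpi : IsQPositive br (qPi br P)) :
    ∃! M : Set B, IsMaxQPositive br M ∧ P ⊆ M := by
  have hsub : P ⊆ qPi br P := subset_pi_self br hP
  have hmax : IsMaxQPositive br (qPi br P) := by
    refine ⟨hpi, fun C hC hC2 => ?_⟩
    refine Set.Subset.antisymm (fun c hc a ha => ?_) hC2
    exact hC.2 c hc a (hC2 (hsub ha))
  refine ⟨qPi br P, ⟨hmax, hsub⟩, ?_⟩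
  rintro M' ⟨hM', hPM'⟩
  have h1 : M' ⊆ qPi br P := fun m hm a ha => hM'.1.2 m hm a (hPM' ha)
  exact (hM'.2 (qPi br P) hpi h1).symm

lemma premax_pi_qpos {P : Set B} (hP : IsQPositive br P)
    (h : ∃! M : Set B, IsMaxQPositive br M ∧ P ⊆ M) :
    IsQPositive br (qPi br P) := by
  obtain ⟨M, ⟨hM, hPM⟩, huniq⟩ := h
  have hkey : qPi br P ⊆ M := by
    intro b hb
    have hins : IsQPositive br (insert b P) := by
      refine ⟨⟨b, Set.mem_insert _ _⟩, ?_⟩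
      rintro c (rfl | hc) d (rfl | hd)
      · simp [qQ]
      · exact hb d hd
      · rw [qq_flip]; exact hb c hc
      · exact hP.2 c hc d hd
    obtain ⟨Mb, hMb, hsub⟩ := exists_max br hins
    have : Mb = M := huniq Mb ⟨hMb, (Set.subset_insert b P).trans hsub⟩
    exact this ▸ hsub (Set.mem_insert _ _)
  exact ⟨⟨hP.1.choose, subset_pi_self br hP hP.1.choose_spec⟩,
    fun x hx y hy => hM.1.2 x (hkey hx) y (hkey hy)⟩

/-- four-point affine expansion identity -/
lemma affine4 (s0 s1 s2 s3 : ℝ) (h : s0 = 1 - s1 - s2 - s3) (u0 u1 u2 u3 : B) :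
    qQ br (s0 • u0 + s1 • u1 + s2 • u2 + s3 • u3)
      = s0 * qQ br u0 + s1 * qQ br u1 + s2 * qQ br u2 + s3 * qQ br u3
        - s0 * s1 * qQ br (u0 - u1) - s0 * s2 * qQ br (u0 - u2)
        - s0 * s3 * qQ br (u0 - u3) - s1 * s2 * qQ br (u1 - u2)
        - s1 * s3 * qQ br (u1 - u3) - s2 * s3 * qQ br (u2 - u3) := by
  subst h
  unfold qQ
  simp only [map_add, map_sub, map_smul, LinearMap.add_apply, LinearMap.sub_apply,
    LinearMap.smul_apply, smul_eq_mul]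
  ring

end Stmt17Aux


namespace Stmt17Aux

variable (br : B →ₗ[ℝ] B →ₗ[ℝ] ℝ)

private lemma arith1 (σ s q η : ℝ) (hσ : 0 ≤ σ) (hs : 0 ≤ s) (hsη : s ≤ η) (hq : 0 ≤ q) :
    (1 - σ) * s * q ≤ η * q := by
  nlinarith [mul_le_mul_of_nonneg_right hsη hq, mul_nonneg hσ (mul_nonneg hs hq)]

private lemma arith2 (s t q η : ℝ) (hs : 0 ≤ s) (hsη : s ≤ η) (ht : 0 ≤ t) (ht1 : t ≤ 1)
    (hq : 0 ≤ q) : s * t * q ≤ η * q := by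
  nlinarith [mul_le_mul_of_nonneg_right hsη hq,
    mul_nonneg (mul_nonneg hs hq) (sub_nonneg.mpr ht1)]

set_option maxHeartbeats 1000000 in
lemma core {P : Set B} (hP : IsQPositive br P)
    (hpi : IsQPositive br (qPi br P))
    (b0 : B) (δ : ℝ) (hδ : 0 < δ) (hb0 : ∀ a ∈ P, δ ≤ qQ br (b0 - a)) :
    ∀ x ∈ qPi br P, ∀ y ∈ qPi br P, ∀ lam : ℝ,
      lam • x + (1 - lam) • y ∈ qPi br P := by
  intro x hx y hy lam a ha
  have hb0pi : b0 ∈ qPi br P := fun a' ha' => le_trans hδ.le (hb0 a' ha')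
  have hapi : a ∈ qPi br P := subset_pi_self br hP ha
  obtain ⟨Q1, hQ1⟩ : ∃ t, t = qQ br (b0 - x) := ⟨_, rfl⟩
  obtain ⟨Q2, hQ2⟩ : ∃ t, t = qQ br (b0 - y) := ⟨_, rfl⟩
  obtain ⟨Q3, hQ3⟩ : ∃ t, t = qQ br (b0 - a) := ⟨_, rfl⟩
  obtain ⟨Q4, hQ4⟩ : ∃ t, t = qQ br (x - y) := ⟨_, rfl⟩
  obtain ⟨Q5, hQ5⟩ : ∃ t, t = qQ br (x - a) := ⟨_, rfl⟩
  obtain ⟨Q6, hQ6⟩ : ∃ t, t = qQ br (y - a) := ⟨_, rfl⟩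
  have hQ1n : 0 ≤ Q1 := hQ1 ▸ hpi.2 b0 hb0pi x hx
  have hQ2n : 0 ≤ Q2 := hQ2 ▸ hpi.2 b0 hb0pi y hy
  have hQ3n : 0 ≤ Q3 := hQ3 ▸ hpi.2 b0 hb0pi a hapi
  have hQ4n : 0 ≤ Q4 := hQ4 ▸ hpi.2 x hx y hy
  have hQ5n : 0 ≤ Q5 := hQ5 ▸ hpi.2 x hx a hapi
  have hQ6n : 0 ≤ Q6 := hQ6 ▸ hpi.2 y hy a hapi
  obtain ⟨K, hK⟩ : ∃ t : ℝ, t = Q1 + Q2 + Q3 + Q4 + Q5 + Q6 := ⟨_, rfl⟩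
  have hKn : 0 ≤ K := by rw [hK]; positivity
  obtain ⟨η, hη⟩ : ∃ t : ℝ, t = min (1/6 : ℝ) (δ / (6 * (K + 1))) := ⟨_, rfl⟩
  have hηpos : 0 < η := by
    rw [hη]; apply lt_min (by norm_num); positivity
  have hη1 : η ≤ 1/6 := hη ▸ min_le_left _ _
  have hη2 : η * (6 * (K + 1)) ≤ δ := by
    have h6 : (0:ℝ) < 6 * (K + 1) := by positivity
    calc η * (6 * (K + 1)) ≤ (δ / (6 * (K + 1))) * (6 * (K + 1)) := by
          exact mul_le_mul_of_nonneg_right (hη ▸ min_le_right _ _) h6.le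
      _ = δ := by field_simp
  have hmem : ∀ s1 s2 s3 : ℝ, 0 ≤ s1 → s1 ≤ η → 0 ≤ s2 → s2 ≤ η → 0 ≤ s3 → s3 ≤ η →
      b0 + s1 • (x - b0) + s2 • (y - b0) + s3 • (a - b0) ∈ qPi br P := by
    intro s1 s2 s3 h1n h1η h2n h2η h3n h3η a' ha'
    have hveq : b0 + s1 • (x - b0) + s2 • (y - b0) + s3 • (a - b0) - a'
        = (1 - s1 - s2 - s3) • (b0 - a') + s1 • (x - a') + s2 • (y - a') + s3 • (a - a') := by
      module
    show 0 ≤ qQ br _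
    rw [hveq, affine4 br (1 - s1 - s2 - s3) s1 s2 s3 (by ring) (b0 - a') (x - a') (y - a') (a - a')]
    simp only [sub_sub_sub_cancel_right]
    rw [← hQ1, ← hQ2, ← hQ3, ← hQ4, ← hQ5, ← hQ6]
    have e1 : 0 ≤ qQ br (x - a') := hx a' ha'
    have e2 : 0 ≤ qQ br (y - a') := hy a' ha'
    have e3 : 0 ≤ qQ br (a - a') := hP.2 a ha a' ha'
    have e0 : δ ≤ qQ br (b0 - a') := hb0 a' ha'
    clear hveq hx hy hb0 hb0pi hapi
    have hσn : 0 ≤ s1 + s2 + s3 := by linarith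
    have hs0a : (1:ℝ)/2 ≤ 1 - s1 - s2 - s3 := by linarith
    have t1 : (1 - (s1 + s2 + s3)) * s1 * Q1 ≤ η * Q1 := arith1 _ _ _ _ hσn h1n h1η hQ1n
    have t2 : (1 - (s1 + s2 + s3)) * s2 * Q2 ≤ η * Q2 := arith1 _ _ _ _ hσn h2n h2η hQ2n
    have t3 : (1 - (s1 + s2 + s3)) * s3 * Q3 ≤ η * Q3 := arith1 _ _ _ _ hσn h3n h3η hQ3n
    have t4 : s1 * s2 * Q4 ≤ η * Q4 := arith2 _ _ _ _ h1n h1η h2n (by linarith) hQ4n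
    have t5 : s1 * s3 * Q5 ≤ η * Q5 := arith2 _ _ _ _ h1n h1η h3n (by linarith) hQ5n
    have t6 : s2 * s3 * Q6 ≤ η * Q6 := arith2 _ _ _ _ h2n h2η h3n (by linarith) hQ6n
    have hηK : η * K ≤ δ / 6 := by
      have h2' : η * (6 * (K + 1)) ≤ δ := hη2
      nlinarith [hηpos.le]
    have hlin : (1/2) * δ ≤ (1 - s1 - s2 - s3) * qQ br (b0 - a') :=
      mul_le_mul hs0a e0 hδ.le (by linarith)
    have hsx : 0 ≤ s1 * qQ br (x - a') := mul_nonneg h1n e1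
    have hsy : 0 ≤ s2 * qQ br (y - a') := mul_nonneg h2n e2
    have hsa : 0 ≤ s3 * qQ br (a - a') := mul_nonneg h3n e3
    have hcross : η * Q1 + η * Q2 + η * Q3 + η * Q4 + η * Q5 + η * Q6 = η * K := by
      rw [hK]; ring
    linarith
  obtain ⟨lp, hlp⟩ : ∃ t : ℝ, t = max lam 0 := ⟨_, rfl⟩
  obtain ⟨ln, hln⟩ : ∃ t : ℝ, t = max (-lam) 0 := ⟨_, rfl⟩
  obtain ⟨mp, hmp⟩ : ∃ t : ℝ, t = max (1 - lam) 0 := ⟨_, rfl⟩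
  obtain ⟨mn, hmn⟩ : ∃ t : ℝ, t = max (-(1 - lam)) 0 := ⟨_, rfl⟩
  have hlpn : 0 ≤ lp := hlp ▸ le_max_right _ _
  have hlnn : 0 ≤ ln := hln ▸ le_max_right _ _
  have hmpn : 0 ≤ mp := hmp ▸ le_max_right _ _
  have hmnn : 0 ≤ mn := hmn ▸ le_max_right _ _
  have hld : lp - ln = lam := by
    rw [hlp, hln]; exact max_zero_sub_max_neg_zero_eq_self lam
  have hmd : mp - mn = 1 - lam := by
    rw [hmp, hmn]; exact max_zero_sub_max_neg_zero_eq_self (1 - lam)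
  obtain ⟨S, hS⟩ : ∃ t : ℝ, t = lp + ln + mp + mn + 1 := ⟨_, rfl⟩
  have hSpos : (0:ℝ) < S := by rw [hS]; positivity
  obtain ⟨ε, hε⟩ : ∃ t : ℝ, t = η / S := ⟨_, rfl⟩
  have hεpos : 0 < ε := by rw [hε]; positivity
  have hεS : ε * S = η := by rw [hε]; field_simp
  have hb1 : ε * lp ≤ η := by
    calc ε * lp ≤ ε * S := mul_le_mul_of_nonneg_left (by linarith) hεpos.le
      _ = η := hεS
  have hb2 : ε * ln ≤ η := by
    calc ε * ln ≤ ε * S := mul_le_mul_of_nonneg_left (by linarith) hεpos.le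
      _ = η := hεS
  have hb3 : ε * mp ≤ η := by
    calc ε * mp ≤ ε * S := mul_le_mul_of_nonneg_left (by linarith) hεpos.le
      _ = η := hεS
  have hb4 : ε * mn ≤ η := by
    calc ε * mn ≤ ε * S := mul_le_mul_of_nonneg_left (by linarith) hεpos.le
      _ = η := hεS
  have hb5 : ε ≤ η := by
    calc ε = ε * 1 := (mul_one ε).symm
      _ ≤ ε * S := mul_le_mul_of_nonneg_left (by linarith) hεpos.le
      _ = η := hεS
  have hp1 : b0 + (ε * lp) • (x - b0) + (ε * mp) • (y - b0) + (0:ℝ) • (a - b0) ∈ qPi br P :=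
    hmem _ _ _ (mul_nonneg hεpos.le hlpn) hb1 (mul_nonneg hεpos.le hmpn) hb3 le_rfl hηpos.le
  have hp2 : b0 + (ε * ln) • (x - b0) + (ε * mn) • (y - b0) + (ε:ℝ) • (a - b0) ∈ qPi br P :=
    hmem _ _ _ (mul_nonneg hεpos.le hlnn) hb2 (mul_nonneg hεpos.le hmnn) hb4 hεpos.le hb5
  have hqd : 0 ≤ qQ br ((b0 + (ε * lp) • (x - b0) + (ε * mp) • (y - b0) + (0:ℝ) • (a - b0))
      - (b0 + (ε * ln) • (x - b0) + (ε * mn) • (y - b0) + (ε:ℝ) • (a - b0))) :=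
    hpi.2 _ hp1 _ hp2
  have hdiff : (b0 + (ε * lp) • (x - b0) + (ε * mp) • (y - b0) + (0:ℝ) • (a - b0))
      - (b0 + (ε * ln) • (x - b0) + (ε * mn) • (y - b0) + (ε:ℝ) • (a - b0))
      = ε • ((lp - ln) • x + (mp - mn) • y - a) := by
    have hscal : lp + mp = ln + mn + 1 := by linarith
    match_scalars <;> first | ring1 | linear_combination (-ε : ℝ) * hscal | linear_combination (ε : ℝ) * hscal
  rw [hdiff, hld, hmd, qq_smul] at hqd
  nlinarith [hqd, mul_pos hεpos hεpos]

end Stmt17Aux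

namespace Stmt17Aux

variable (br : B →ₗ[ℝ] B →ₗ[ℝ] ℝ)

lemma margin_of_phi_lt {P : Set B} (hsym : ∀ x y : B, br x y = br y x)
    {b0 : B} (h : PhiF br P b0 < ((qQ br b0 : ℝ) : EReal)) :
    ∃ δ : ℝ, 0 < δ ∧ ∀ a ∈ P, δ ≤ qQ br (b0 - a) := by
  obtain ⟨r, hr1, hr2⟩ := EReal.exists_between_coe_real h
  refine ⟨qQ br b0 - r, by linarith [EReal.coe_lt_coe_iff.mp hr2], ?_⟩
  intro a ha
  have hterm : ((br b0 a - qQ br a : ℝ) : EReal) ≤ PhiF br P b0 :=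
    le_biSup (fun a => ((br b0 a - qQ br a : ℝ) : EReal)) ha
  have : ((br b0 a - qQ br a : ℝ) : EReal) < (r : EReal) := lt_of_le_of_lt hterm hr1
  have hreal : br b0 a - qQ br a < r := EReal.coe_lt_coe_iff.mp this
  rw [qq_sub br hsym]
  linarith

lemma phi_ge_pi_qpos {P : Set B} (hP : IsQPositive br P)
    (hsym : ∀ x y : B, br x y = br y x)
    (h : ∀ b : B, ((qQ br b : ℝ) : EReal) ≤ PhiF br P b) :
    IsQPositive br (qPi br P) := by
  refine ⟨⟨hP.1.choose, subset_pi_self br hP hP.1.choose_spec⟩, ?_⟩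
  intro x hx y hy
  set m : B := (1/2 : ℝ) • x + (1/2 : ℝ) • y with hm
  have hup : PhiF br P m ≤ (((qQ br x + qQ br y)/2 : ℝ) : EReal) := by
    refine iSup₂_le fun a ha => ?_
    rw [EReal.coe_le_coe_iff]
    have h1 : 0 ≤ qQ br (x - a) := hx a ha
    have h2 : 0 ≤ qQ br (y - a) := hy a ha
    rw [qq_sub br hsym] at h1 h2
    have hbrm : br m a = (1/2) * br x a + (1/2) * br y a := by
      rw [hm]
      simp only [map_add, map_smul, LinearMap.add_apply, LinearMap.smul_apply, smul_eq_mul]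
    rw [hbrm]
    linarith
  have hq : qQ br m ≤ (qQ br x + qQ br y)/2 :=
    EReal.coe_le_coe_iff.mp (le_trans (h m) hup)
  have hmm : qQ br m = (1/2:ℝ)^2 * qQ br (x + y) := by
    rw [hm, ← smul_add, qq_smul]
  rw [hmm, qq_add br hsym] at hq
  rw [qq_sub br hsym]
  linarith

lemma affine_pi_qpos {P : Set B} (hP : IsQPositive br P)
    (hsym : ∀ x y : B, br x y = br y x)
    (h : ∀ x ∈ qPi br P, ∀ y ∈ qPi br P, ∀ lam : ℝ,
        lam • x + (1 - lam) • y ∈ qPi br P) :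
    IsQPositive br (qPi br P) := by
  refine ⟨⟨hP.1.choose, subset_pi_self br hP hP.1.choose_spec⟩, ?_⟩
  intro x hx y hy
  obtain ⟨a, ha⟩ := hP.1
  by_contra hneg
  push_neg at hneg
  obtain ⟨A, hA⟩ : ∃ t, t = qQ br (x - y) := ⟨_, rfl⟩
  obtain ⟨E, hE⟩ : ∃ t, t = br (y - a) (x - y) := ⟨_, rfl⟩
  obtain ⟨C, hC⟩ : ∃ t, t = qQ br (y - a) := ⟨_, rfl⟩
  have hCn : 0 ≤ C := hC ▸ hy a ha
  have hAneg : A < 0 := hA ▸ hneg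
  set lam0 : ℝ := (|E| + C + 1)/(-A) + 1 with hlam0
  have hlam1 : 1 ≤ lam0 := by
    rw [hlam0]
    have : 0 ≤ (|E| + C + 1)/(-A) := div_nonneg (by positivity) (by linarith)
    linarith
  have hmem := h x hx y hy lam0 a ha
  have hvec : lam0 • x + (1 - lam0) • y - a = (y - a) + lam0 • (x - y) := by module
  rw [hvec, qq_add_smul br hsym, ← hE, ← hC, ← hA] at hmem
  have hA0 : -A ≠ 0 := by linarith
  have h1 : (-A) * lam0 = |E| + C + 1 + (-A) := by
    rw [hlam0]
    field_simp
    rw [mul_add, mul_neg, mul_div_assoc', mul_div_cancel_left₀ _ hAneg.ne]; ring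
  nlinarith [hmem, h1, hlam1, hCn, le_abs_self E, abs_nonneg E,
    mul_nonneg (sub_nonneg.mpr hlam1) (by positivity : (0:ℝ) ≤ C + 1),
    mul_nonneg (by linarith : (0:ℝ) ≤ lam0) (sub_nonneg.mpr (le_abs_self E))]

end Stmt17Aux

/-- P is premaximally q-positive iff either Φ_P ≥ q on B
or P^π is affine. -/
theorem stmt17 [Nontrivial B] (br : B →ₗ[ℝ] B →ₗ[ℝ] ℝ)
    (hsym : ∀ x y : B, br x y = br y x)
    (P : Set B) (hP : IsQPositive br P) :
    (∃! M : Set B, IsMaxQPositive br M ∧ P ⊆ M) ↔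
      ((∀ b : B, ((qQ br b : ℝ) : EReal) ≤ PhiF br P b) ∨
       (∀ x ∈ qPi br P, ∀ y ∈ qPi br P, ∀ lam : ℝ,
          lam • x + (1 - lam) • y ∈ qPi br P)) := by
  constructor
  · intro hpre
    have hpi : IsQPositive br (qPi br P) := Stmt17Aux.premax_pi_qpos br hP hpre
    by_cases hphi : ∀ b : B, ((qQ br b : ℝ) : EReal) ≤ PhiF br P b
    · exact Or.inl hphi
    · right
      push_neg at hphi
      obtain ⟨b0, hb0⟩ := hphi
      obtain ⟨δ, hδ, hm⟩ := Stmt17Aux.margin_of_phi_lt br hsym hb0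
      exact Stmt17Aux.core br hP hpi b0 δ hδ hm
  · rintro (h | h)
    · exact Stmt17Aux.pi_qpos_premax br hP (Stmt17Aux.phi_ge_pi_qpos br hP hsym h)
    · exact Stmt17Aux.pi_qpos_premax br hP (Stmt17Aux.affine_pi_qpos br hP hsym h)
end
end

section
/- Let B be an SSD space and f : B → ℝ ∪ {+∞} a proper convex function. Then for every x, y ∈ B and every α, β ≥ 0 with α + β = 1, one has α·max{f(x), q(x)} + β·max{f^@(y), q(y)} ≥ q(αx + βy) (with the convention that the left-hand side is +∞ if f(x) = +∞ with α > 0 or f^@(y) = +∞ with β > 0). -/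
noncomputable section

variable {B : Type*} [AddCommGroup B] [Module ℝ B]

lemma aux_mul_ne_bot (c : ℝ) (hc : 0 < c) (z : EReal) (hz : z ≠ ⊥) :
    (c : EReal) * z ≠ ⊥ := by
  induction z using EReal.rec with
  | bot => exact absurd rfl hz
  | coe m => rw [← EReal.coe_mul]; exact EReal.coe_ne_bot _
  | top => rw [EReal.coe_mul_top_of_pos hc]; exact (by simp)

/-- For a proper convex f and α, β ≥ 0 with α + β = 1,
α·max{f(x), q(x)} + β·max{f^@(y), q(y)} ≥ q(αx + βy). -/
theorem stmt18 [Nontrivial B] (br : B →ₗ[ℝ] B →ₗ[ℝ] ℝ)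
    (hsym : ∀ x y : B, br x y = br y x)
    (f : B → EReal) (hconv : ConvexE f)
    (hbot : ∀ x, f x ≠ ⊥) (htop : ∃ x, f x ≠ ⊤) :
    ∀ x y : B, ∀ α β : ℝ, 0 ≤ α → 0 ≤ β → α + β = 1 →
      ((qQ br (α • x + β • y) : ℝ) : EReal) ≤
        (α : EReal) * max (f x) ((qQ br x : ℝ) : EReal) +
        (β : EReal) * max (intrinsicConj br f y) ((qQ br y : ℝ) : EReal) := by
  intro x y α β hα hβ hαβ
  set M1 := max (f x) ((qQ br x : ℝ) : EReal) with hM1def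
  set M2 := max (intrinsicConj br f y) ((qQ br y : ℝ) : EReal) with hM2def
  have hqxM1 : ((qQ br x : ℝ) : EReal) ≤ M1 := le_max_right _ _
  have hqyM2 : ((qQ br y : ℝ) : EReal) ≤ M2 := le_max_right _ _
  have hM1bot : M1 ≠ ⊥ := fun h => by simp [h] at hqxM1
  have hM2bot : M2 ≠ ⊥ := fun h => by simp [h] at hqyM2
  have hconjge : ((br x y : ℝ) : EReal) - f x ≤ intrinsicConj br f y :=
    le_iSup (fun c => ((br c y : ℝ) : EReal) - f c) x
  rcases hα.eq_or_lt with h0 | hαpos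
  · have hβ1 : β = 1 := by linarith
    subst hβ1
    rw [← h0]
    simp only [zero_smul, zero_add, one_smul, EReal.coe_zero, zero_mul,
      EReal.coe_one, one_mul]
    exact hqyM2
  rcases hβ.eq_or_lt with h0' | hβpos
  · have hα1 : α = 1 := by linarith
    subst hα1
    rw [← h0']
    simp only [zero_smul, add_zero, one_smul, EReal.coe_zero, zero_mul,
      EReal.coe_one, one_mul]
    exact hqxM1
  by_cases hM1top : M1 = ⊤
  · have : (α : EReal) * M1 + (β : EReal) * M2 = ⊤ := by
      rw [hM1top, EReal.coe_mul_top_of_pos hαpos]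
      exact EReal.top_add_of_ne_bot (aux_mul_ne_bot β hβpos M2 hM2bot)
    rw [this]; exact le_top
  by_cases hM2top : M2 = ⊤
  · have : (α : EReal) * M1 + (β : EReal) * M2 = ⊤ := by
      rw [hM2top, EReal.coe_mul_top_of_pos hβpos]
      exact EReal.add_top_of_ne_bot (aux_mul_ne_bot α hαpos M1 hM1bot)
    rw [this]; exact le_top
  obtain ⟨m1, hm1⟩ : ∃ m : ℝ, M1 = (m : EReal) :=
    ⟨M1.toReal, (EReal.coe_toReal hM1top hM1bot).symm⟩
  obtain ⟨m2, hm2⟩ : ∃ m : ℝ, M2 = (m : EReal) :=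
    ⟨M2.toReal, (EReal.coe_toReal hM2top hM2bot).symm⟩
  have hfxM1 : f x ≤ M1 := le_max_left _ _
  have hfxtop : f x ≠ ⊤ := fun h => hM1top (top_le_iff.mp (h ▸ hfxM1))
  obtain ⟨rf, hrf⟩ : ∃ r : ℝ, f x = (r : EReal) :=
    ⟨(f x).toReal, (EReal.coe_toReal hfxtop (hbot x)).symm⟩
  have hconjM2 : intrinsicConj br f y ≤ M2 := le_max_left _ _
  have h1 : rf ≤ m1 := by rw [hrf, hm1] at hfxM1; exact_mod_cast hfxM1
  have h2 : qQ br x ≤ m1 := by rw [hm1] at hqxM1; exact_mod_cast hqxM1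
  have h3 : qQ br y ≤ m2 := by rw [hm2] at hqyM2; exact_mod_cast hqyM2
  have h4 : br x y - rf ≤ m2 := by
    have := le_trans hconjge hconjM2
    rw [hrf, hm2, ← EReal.coe_sub] at this
    exact_mod_cast this
  have hq : qQ br (α • x + β • y) =
      α^2 * qQ br x + α*β*(br x y) + β^2 * qQ br y := by
    simp only [qQ, map_add, map_smul, LinearMap.add_apply, LinearMap.smul_apply,
      smul_eq_mul, hsym y x]
    ring
  have e : α * m1 + β * m2 = α^2*m1 + α*β*m1 + α*β*m2 + β^2*m2 := by
    linear_combination (-(α*m1) - β*m2) * hαβ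
  have key : qQ br (α • x + β • y) ≤ α * m1 + β * m2 := by
    rw [hq, e]
    nlinarith [mul_le_mul_of_nonneg_left h2 (mul_nonneg hα hα),
      mul_le_mul_of_nonneg_left h3 (mul_nonneg hβ hβ),
      mul_le_mul_of_nonneg_left h4 (mul_nonneg hα hβ),
      mul_le_mul_of_nonneg_left h1 (mul_nonneg hα hβ)]
  rw [hm1, hm2, ← EReal.coe_mul, ← EReal.coe_mul, ← EReal.coe_add]
  exact_mod_cast key
end
end

section
/- Let B be an SSD space and let f : B → ℝ ∪ {+∞} be a minimal element of the set of convex functions minorized by q; that is, f is convex with f ≥ q on B, and every convex function g : B → ℝ ∪ {+∞} with q ≤ g ≤ f on B equals f. Then f^@(x) ≥ f(x) for all x ∈ B. -/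
noncomputable section

variable {B : Type*} [AddCommGroup B] [Module ℝ B]

private lemma ereal_coe_mul_ne_bot (c : ℝ) (hc : 0 ≤ c) (X : EReal) (hX : X ≠ ⊥) :
    (c : EReal) * X ≠ ⊥ := by
  induction X with
  | bot => exact absurd rfl hX
  | coe x => rw [← EReal.coe_mul]; exact EReal.coe_ne_bot _
  | top =>
      rcases hc.eq_or_lt with rfl | hpos
      · simp
      · rw [EReal.coe_mul_top_of_pos hpos]; exact top_ne_bot

private lemma ereal_coe_mul_add (c : ℝ) (hc : 0 ≤ c) (X Y : EReal) (hX : X ≠ ⊥) (hY : Y ≠ ⊥) :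
    (c : EReal) * (X + Y) = (c : EReal) * X + (c : EReal) * Y := by
  rcases hc.eq_or_lt with rfl | hpos
  · simp
  · induction X with
    | bot => exact absurd rfl hX
    | coe x =>
        induction Y with
        | bot => exact absurd rfl hY
        | coe y => norm_cast; ring
        | top =>
            rw [EReal.add_top_of_ne_bot (EReal.coe_ne_bot x), EReal.coe_mul_top_of_pos hpos,
              ← EReal.coe_mul, EReal.add_top_of_ne_bot (EReal.coe_ne_bot _)]
    | top =>
        rw [EReal.top_add_of_ne_bot hY, EReal.coe_mul_top_of_pos hpos,
          EReal.top_add_of_ne_bot (ereal_coe_mul_ne_bot c hc Y hY)]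

private lemma ereal_le_sInf_add (A C : Set EReal) (hA : A.Nonempty) (hC : C.Nonempty)
    (hbA : sInf A ≠ ⊥) (hbC : sInf C ≠ ⊥) (x : EReal)
    (h : ∀ u ∈ A, ∀ v ∈ C, x ≤ u + v) : x ≤ sInf A + sInf C := by
  by_contra hx
  push_neg at hx
  have hAt : sInf A ≠ ⊤ := by
    intro ht
    rw [ht, EReal.top_add_of_ne_bot hbC] at hx
    exact (not_top_lt) hx
  have hCt : sInf C ≠ ⊤ := by
    intro ht
    rw [ht, EReal.add_top_of_ne_bot hbA] at hx
    exact (not_top_lt) hx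
  obtain ⟨a, ha⟩ : ∃ a : ℝ, sInf A = (a : EReal) := ⟨(sInf A).toReal, (EReal.coe_toReal hAt hbA).symm⟩
  obtain ⟨c, hc⟩ : ∃ c : ℝ, sInf C = (c : EReal) := ⟨(sInf C).toReal, (EReal.coe_toReal hCt hbC).symm⟩
  rw [ha, hc] at hx
  have hx' : ((a + c : ℝ) : EReal) < x := by exact_mod_cast hx
  obtain ⟨u, hu1, hu2⟩ := EReal.lt_iff_exists_real_btwn.1 hx'
  have hu1' : a + c < u := by exact_mod_cast hu1
  set ε : ℝ := (u - (a + c)) / 2 with hε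
  have hεpos : 0 < ε := by simp only [hε]; linarith
  obtain ⟨w1, hw1A, hw1⟩ := sInf_lt_iff.1 (show sInf A < ((a + ε : ℝ) : EReal) by
    rw [ha]; exact_mod_cast (by linarith : a < a + ε))
  obtain ⟨w2, hw2C, hw2⟩ := sInf_lt_iff.1 (show sInf C < ((c + ε : ℝ) : EReal) by
    rw [hc]; exact_mod_cast (by linarith : c < c + ε))
  have h1 : x ≤ w1 + w2 := h w1 hw1A w2 hw2C
  have h2 : w1 + w2 < ((a + ε : ℝ) : EReal) + ((c + ε : ℝ) : EReal) := EReal.add_lt_add hw1 hw2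
  have h3 : ((a + ε : ℝ) : EReal) + ((c + ε : ℝ) : EReal) = (u : EReal) := by
    rw [← EReal.coe_add]; norm_cast; simp only [hε]; ring
  exact absurd ((h1.trans_lt h2).trans_eq h3) (not_lt.2 hu2.le)

private lemma ereal_sInf_mul (a : ℝ) (ha : 0 < a) (S : Set EReal) :
    sInf ((fun v => (a : EReal) * v) '' S) = (a : EReal) * sInf S := by
  have hmono : ∀ (c : ℝ), 0 ≤ c → ∀ X Y : EReal, X ≤ Y → (c : EReal) * X ≤ (c : EReal) * Y :=
    fun c hc X Y h => mul_le_mul_of_nonneg_left h (by exact_mod_cast hc)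
  apply le_antisymm
  · have h1 : ((a⁻¹ : ℝ) : EReal) * sInf ((fun v => (a : EReal) * v) '' S) ≤ sInf S := by
      apply le_sInf
      intro v hv
      have h2 : sInf ((fun v => (a : EReal) * v) '' S) ≤ (a : EReal) * v :=
        sInf_le ⟨v, hv, rfl⟩
      calc ((a⁻¹ : ℝ) : EReal) * sInf ((fun v => (a : EReal) * v) '' S)
          ≤ ((a⁻¹ : ℝ) : EReal) * ((a : EReal) * v) :=
            hmono _ (by positivity) _ _ h2
        _ = v := by
            rw [← mul_assoc, ← EReal.coe_mul, inv_mul_cancel₀ ha.ne', EReal.coe_one, one_mul]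
    calc sInf ((fun v => (a : EReal) * v) '' S)
        = (a : EReal) * (((a⁻¹ : ℝ) : EReal) * sInf ((fun v => (a : EReal) * v) '' S)) := by
          rw [← mul_assoc, ← EReal.coe_mul, mul_inv_cancel₀ ha.ne', EReal.coe_one, one_mul]
      _ ≤ (a : EReal) * sInf S := hmono _ ha.le _ _ h1
  · apply le_sInf
    rintro w ⟨v, hv, rfl⟩
    exact hmono _ ha.le _ _ (sInf_le hv)

private lemma keyLemma (br : B →ₗ[ℝ] B →ₗ[ℝ] ℝ) (hsym : ∀ x y : B, br x y = br y x)
    (f : B → EReal) (hconv : ConvexE f)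
    (hq : ∀ x : B, ((qQ br x : ℝ) : EReal) ≤ f x)
    (hmin : ∀ g : B → EReal, ConvexE g →
      (∀ x : B, ((qQ br x : ℝ) : EReal) ≤ g x) →
      (∀ x : B, g x ≤ f x) → g = f)
    (x₀ : B) (m : ℝ) (hm0 : qQ br x₀ ≤ m)
    (hm1 : ∀ y : B, ((br y x₀ : ℝ) : EReal) ≤ (m : EReal) + f y) :
    f x₀ ≤ (m : EReal) := by
  classical
  have hmono : ∀ (c : ℝ), 0 ≤ c → ∀ X Y : EReal, X ≤ Y → (c : EReal) * X ≤ (c : EReal) * Y :=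
    fun c hc X Y h => mul_le_mul_of_nonneg_left h (by exact_mod_cast hc)
  have hfbot : ∀ y, f y ≠ ⊥ := fun y h =>
    absurd ((hq y).trans_eq h) (EReal.bot_lt_coe _).not_ge
  set S : B → Set EReal := fun z => insert (f z)
    {v | ∃ α : ℝ, ∃ y : B, 0 < α ∧ α ≤ 1 ∧ α • x₀ + (1 - α) • y = z ∧
      v = (α : EReal) * (m : EReal) + ((1 - α : ℝ) : EReal) * f y} with hSdef
  set g : B → EReal := fun z => sInf (S z) with hgdef
  -- every element of S z is ≥ q z
  have hlow : ∀ z, ∀ v ∈ S z, ((qQ br z : ℝ) : EReal) ≤ v := by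
    intro z v hv
    rcases hv with hv | ⟨α, y, hα, hα1, hzy, rfl⟩
    · rw [hv]; exact hq z
    · -- core inequality
      rcases eq_or_lt_of_le hα1 with rfl | hαlt
      · -- α = 1 : z = x₀
        have hz : z = x₀ := by rw [← hzy]; simp
        subst hz
        simp only [sub_self, EReal.coe_zero, zero_mul, add_zero, EReal.coe_one, one_mul]
        exact_mod_cast hm0
      · have hβ : 0 < 1 - α := by linarith
        rcases eq_or_ne (f y) ⊤ with htop | hne
        · rw [htop, EReal.coe_mul_top_of_pos (by exact_mod_cast hβ),
            ← EReal.coe_mul, EReal.add_top_of_ne_bot (EReal.coe_ne_bot _)]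
          exact le_top
        · obtain ⟨F, hF⟩ : ∃ F : ℝ, f y = (F : EReal) :=
            ⟨(f y).toReal, (EReal.coe_toReal hne (hfbot y)).symm⟩
          have h1 : qQ br y ≤ F := by
            have := hq y; rw [hF] at this; exact_mod_cast this
          have h2 : br y x₀ ≤ m + F := by
            have := hm1 y; rw [hF] at this; exact_mod_cast this
          have hexp : qQ br z = α^2 * qQ br x₀ + α*(1-α)*(br y x₀) + (1-α)^2 * qQ br y := by
            rw [← hzy]
            simp only [qQ, map_add, map_smul, LinearMap.add_apply, LinearMap.smul_apply,
              smul_eq_mul]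
            rw [hsym x₀ y]
            ring
          rw [hF, ← EReal.coe_mul, ← EReal.coe_mul, ← EReal.coe_add, EReal.coe_le_coe_iff, hexp]
          nlinarith [mul_le_mul_of_nonneg_left hm0 (mul_nonneg hα.le hα.le),
            mul_le_mul_of_nonneg_left h2 (mul_nonneg hα.le hβ.le),
            mul_le_mul_of_nonneg_left h1 (mul_nonneg hβ.le hβ.le)]
  have hqg : ∀ z, ((qQ br z : ℝ) : EReal) ≤ g z := fun z => le_sInf (hlow z)
  have hgbot : ∀ z, g z ≠ ⊥ := fun z h =>
    absurd ((hqg z).trans_eq h) (EReal.bot_lt_coe _).not_ge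
  have hSne : ∀ z, (S z).Nonempty := fun z => ⟨f z, Set.mem_insert _ _⟩
  have hgf : ∀ z, g z ≤ f z := fun z => sInf_le (Set.mem_insert _ _)
  -- g z is at most the value of any representation with α ∈ [0,1]
  have hrep : ∀ (α : ℝ) (y z : B), 0 ≤ α → α ≤ 1 → α • x₀ + (1 - α) • y = z →
      g z ≤ (α : EReal) * (m : EReal) + ((1 - α : ℝ) : EReal) * f y := by
    intro α y z hα hα1 hzy
    rcases hα.eq_or_lt with rfl | hαpos
    · have hy : y = z := by rw [← hzy]; simp
      subst hy
      simp only [EReal.coe_zero, zero_mul, zero_add, sub_zero, EReal.coe_one, one_mul]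
      exact hgf _
    · exact sInf_le (Set.mem_insert_iff.2 (Or.inr ⟨α, y, hαpos, hα1, hzy, rfl⟩))
  -- every element of S z has a representation with α ∈ [0,1]
  have hmem : ∀ z, ∀ v ∈ S z, ∃ α : ℝ, ∃ y : B, 0 ≤ α ∧ α ≤ 1 ∧
      α • x₀ + (1 - α) • y = z ∧
      v = (α : EReal) * (m : EReal) + ((1 - α : ℝ) : EReal) * f y := by
    intro z v hv
    rcases hv with hv | ⟨α, y, hα, hα1, hzy, rfl⟩
    · exact ⟨0, z, le_refl 0, zero_le_one, by simp, by simp [hv]⟩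
    · exact ⟨α, y, hα.le, hα1, hzy, rfl⟩
  -- convexity of g
  have hgconv : ConvexE g := by
    intro z1 z2 a b ha hb hab
    rcases ha.eq_or_lt with rfl | hapos
    · have hb1 : b = 1 := by linarith
      subst hb1
      simp only [EReal.coe_zero, EReal.coe_one, zero_mul, one_mul, zero_add, add_zero,
        zero_smul, one_smul, le_refl]
    rcases hb.eq_or_lt with rfl | hbpos
    · have ha1 : a = 1 := by linarith
      subst ha1
      simp only [EReal.coe_zero, EReal.coe_one, zero_mul, one_mul, zero_add, add_zero,
        zero_smul, one_smul, le_refl]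
    have h1 : (a : EReal) * g z1 = sInf ((fun v => (a : EReal) * v) '' S z1) :=
      (ereal_sInf_mul a hapos _).symm
    have h2 : (b : EReal) * g z2 = sInf ((fun v => (b : EReal) * v) '' S z2) :=
      (ereal_sInf_mul b hbpos _).symm
    rw [h1, h2]
    apply ereal_le_sInf_add _ _ ((hSne z1).image _) ((hSne z2).image _)
    · rw [← h1]; exact ereal_coe_mul_ne_bot a ha _ (hgbot z1)
    · rw [← h2]; exact ereal_coe_mul_ne_bot b hb _ (hgbot z2)
    · rintro u ⟨v1, hv1, rfl⟩ w ⟨v2, hv2, rfl⟩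
      beta_reduce
      obtain ⟨α1, y1, hα1, hα1', hz1, rfl⟩ := hmem z1 v1 hv1
      obtain ⟨α2, y2, hα2, hα2', hz2, rfl⟩ := hmem z2 v2 hv2
      have hβ1 : 0 ≤ 1 - α1 := by linarith
      have hβ2 : 0 ≤ 1 - α2 := by linarith
      set β : ℝ := a * (1 - α1) + b * (1 - α2) with hβdef
      have hβnn : 0 ≤ β := by positivity
      have hαβ : a * α1 + b * α2 = 1 - β := by rw [hβdef]; nlinarith [hab]
      rcases hβnn.eq_or_lt with hβ0 | hβpos
      · -- β = 0 : both α's are 1, z1 = z2 = x₀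
        have e1 : α1 = 1 := by nlinarith [mul_nonneg ha hβ1, mul_nonneg hb hβ2]
        have e2 : α2 = 1 := by nlinarith [mul_nonneg ha hβ1, mul_nonneg hb hβ2]
        subst e1; subst e2
        have hz1' : z1 = x₀ := by rw [← hz1]; simp
        have hz2' : z2 = x₀ := by rw [← hz2]; simp
        have hpt : a • z1 + b • z2 = x₀ := by
          rw [hz1', hz2', ← add_smul, hab, one_smul]
        rw [hpt]
        simp only [sub_self, EReal.coe_zero, zero_mul, add_zero, EReal.coe_one, one_mul]
        have h3 : g x₀ ≤ (1 : EReal) * (m : EReal) + ((1 - 1 : ℝ) : EReal) * f x₀ :=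
          hrep 1 x₀ x₀ zero_le_one (le_refl 1) (by simp)
        simp only [sub_self, EReal.coe_zero, zero_mul, add_zero, EReal.coe_one, one_mul] at h3
        calc g x₀ ≤ (m : EReal) := h3
          _ = ((a * m + b * m : ℝ) : EReal) := by norm_cast; linear_combination (-m) * hab
          _ = (a : EReal) * (m : EReal) + (b : EReal) * (m : EReal) := by
              rw [EReal.coe_add, EReal.coe_mul, EReal.coe_mul]
      · -- β > 0
        set c1 : ℝ := a * (1 - α1) / β with hc1def
        set c2 : ℝ := b * (1 - α2) / β with hc2def
        have hc1 : 0 ≤ c1 := by positivity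
        have hc2 : 0 ≤ c2 := by positivity
        have hsum : c1 + c2 = 1 := by
          rw [hc1def, hc2def, ← add_div, hβdef]
          exact div_self (by rw [← hβdef]; exact hβpos.ne')
        set y : B := c1 • y1 + c2 • y2 with hydef
        have hfy : f y ≤ (c1 : EReal) * f y1 + (c2 : EReal) * f y2 :=
          hconv y1 y2 c1 c2 hc1 hc2 hsum
        set α : ℝ := a * α1 + b * α2 with hαdef
        have hα0 : 0 ≤ α := by positivity
        have h1mα : 1 - α = β := by rw [hαdef]; linarith [hαβ]
        have hα1le : α ≤ 1 := by nlinarith [hβpos]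
        have hβc1 : β * c1 = a * (1 - α1) := by
          rw [hc1def]; field_simp
        have hβc2 : β * c2 = b * (1 - α2) := by
          rw [hc2def]; field_simp
        have hpt : α • x₀ + (1 - α) • y = a • z1 + b • z2 := by
          rw [← hz1, ← hz2, h1mα, hydef, smul_add, smul_smul, smul_smul, hβc1, hβc2]
          rw [hαdef]
          module
        refine le_trans (hrep α y _ hα0 hα1le hpt) ?_
        -- now pure EReal computation
        have hne1 : ((c1 : ℝ) : EReal) * f y1 ≠ ⊥ := ereal_coe_mul_ne_bot _ hc1 _ (hfbot y1)
        have hne2 : ((c2 : ℝ) : EReal) * f y2 ≠ ⊥ := ereal_coe_mul_ne_bot _ hc2 _ (hfbot y2)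
        have hL : ((1 - α : ℝ) : EReal) * f y ≤
            ((a * (1 - α1) : ℝ) : EReal) * f y1 + ((b * (1 - α2) : ℝ) : EReal) * f y2 := by
          calc ((1 - α : ℝ) : EReal) * f y
              ≤ ((1 - α : ℝ) : EReal) * ((c1 : EReal) * f y1 + (c2 : EReal) * f y2) :=
                hmono _ (by linarith) _ _ hfy
            _ = ((1 - α : ℝ) : EReal) * ((c1 : EReal) * f y1) +
                ((1 - α : ℝ) : EReal) * ((c2 : EReal) * f y2) :=
                ereal_coe_mul_add _ (by linarith) _ _ hne1 hne2
            _ = (((1 - α) * c1 : ℝ) : EReal) * f y1 + (((1 - α) * c2 : ℝ) : EReal) * f y2 := by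
                rw [← mul_assoc, ← mul_assoc, ← EReal.coe_mul, ← EReal.coe_mul]
            _ = ((a * (1 - α1) : ℝ) : EReal) * f y1 + ((b * (1 - α2) : ℝ) : EReal) * f y2 := by
                rw [h1mα, hβc1, hβc2]
        have hRa : (a : EReal) * ((α1 : EReal) * (m : EReal) + ((1 - α1 : ℝ) : EReal) * f y1) =
            ((a * (α1 * m) : ℝ) : EReal) + ((a * (1 - α1) : ℝ) : EReal) * f y1 := by
          rw [← EReal.coe_mul α1 m,
            ereal_coe_mul_add a ha _ _ (EReal.coe_ne_bot _)
              (ereal_coe_mul_ne_bot _ hβ1 _ (hfbot y1)),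
            ← mul_assoc (a : EReal) (((1 - α1 : ℝ)) : EReal) (f y1),
            ← EReal.coe_mul a (1 - α1), ← EReal.coe_mul a (α1 * m)]
        have hRb : (b : EReal) * ((α2 : EReal) * (m : EReal) + ((1 - α2 : ℝ) : EReal) * f y2) =
            ((b * (α2 * m) : ℝ) : EReal) + ((b * (1 - α2) : ℝ) : EReal) * f y2 := by
          rw [← EReal.coe_mul α2 m,
            ereal_coe_mul_add b hb _ _ (EReal.coe_ne_bot _)
              (ereal_coe_mul_ne_bot _ hβ2 _ (hfbot y2)),
            ← mul_assoc (b : EReal) (((1 - α2 : ℝ)) : EReal) (f y2),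
            ← EReal.coe_mul b (1 - α2), ← EReal.coe_mul b (α2 * m)]
        rw [hRa, hRb]
        have hmm : (α : EReal) * (m : EReal) = ((a * (α1 * m) : ℝ) : EReal) +
            ((b * (α2 * m) : ℝ) : EReal) := by
          rw [← EReal.coe_mul, ← EReal.coe_add]
          norm_cast
          rw [hαdef]; ring
        calc (α : EReal) * (m : EReal) + ((1 - α : ℝ) : EReal) * f y
            ≤ (α : EReal) * (m : EReal) +
              (((a * (1 - α1) : ℝ) : EReal) * f y1 + ((b * (1 - α2) : ℝ) : EReal) * f y2) :=
              add_le_add le_rfl hL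
          _ = (((a * (α1 * m) : ℝ) : EReal) + ((a * (1 - α1) : ℝ) : EReal) * f y1) +
              (((b * (α2 * m) : ℝ) : EReal) + ((b * (1 - α2) : ℝ) : EReal) * f y2) := by
              rw [hmm]; abel
  -- conclude
  have hgeqf : g = f := hmin g hgconv hqg hgf
  have hfinal : g x₀ ≤ (m : EReal) := by
    have := hrep 1 x₀ x₀ zero_le_one (le_refl 1) (by simp)
    simpa using this
  rw [← hgeqf]
  exact hfinal

/-- If f is a minimal element of the set of convex functions
minorized by q, then f^@ ≥ f. -/
theorem stmt19 [Nontrivial B] (br : B →ₗ[ℝ] B →ₗ[ℝ] ℝ)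
    (hsym : ∀ x y : B, br x y = br y x)
    (f : B → EReal) (hconv : ConvexE f)
    (hq : ∀ x : B, ((qQ br x : ℝ) : EReal) ≤ f x)
    (hmin : ∀ g : B → EReal, ConvexE g →
      (∀ x : B, ((qQ br x : ℝ) : EReal) ≤ g x) →
      (∀ x : B, g x ≤ f x) → g = f) :
    ∀ x : B, f x ≤ intrinsicConj br f x := by
  intro x₀
  rcases eq_or_ne (intrinsicConj br f x₀) ⊤ with htop | hne
  · rw [htop]; exact le_top
  set Q : EReal := intrinsicConj br f x₀ with hQdef
  set m : ℝ := max (qQ br x₀) Q.toReal with hmdef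
  have hm0 : qQ br x₀ ≤ m := le_max_left _ _
  have hfbot : ∀ y, f y ≠ ⊥ := fun y h =>
    absurd ((hq y).trans_eq h) (EReal.bot_lt_coe _).not_ge
  have hterm : ∀ y : B, ((br y x₀ : ℝ) : EReal) - f y ≤ Q := by
    intro y
    rw [hQdef, intrinsicConj]
    exact le_iSup (fun c => ((br c x₀ : ℝ) : EReal) - f c) y
  have hm1 : ∀ y : B, ((br y x₀ : ℝ) : EReal) ≤ (m : EReal) + f y := by
    intro y
    rcases eq_or_ne (f y) ⊤ with hfy | hfy
    · rw [hfy, EReal.add_top_of_ne_bot (EReal.coe_ne_bot m)]; exact le_top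
    · obtain ⟨F, hF⟩ : ∃ F : ℝ, f y = (F : EReal) :=
        ⟨(f y).toReal, (EReal.coe_toReal hfy (hfbot y)).symm⟩
      have h1 := hterm y
      rw [hF, ← EReal.coe_sub] at h1
      have hQb : Q ≠ ⊥ := fun h =>
        absurd (h1.trans_eq h) (EReal.bot_lt_coe _).not_ge
      have hQr : ((Q.toReal : ℝ) : EReal) = Q := EReal.coe_toReal hne hQb
      rw [← hQr] at h1
      have h2 : br y x₀ - F ≤ Q.toReal := by exact_mod_cast h1
      have h3 : Q.toReal ≤ m := le_max_right _ _
      have h4 : br y x₀ ≤ m + F := by linarith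
      rw [hF, ← EReal.coe_add]
      exact_mod_cast h4
  have hkey : f x₀ ≤ (m : EReal) := keyLemma br hsym f hconv hq hmin x₀ m hm0 hm1
  have hfx : f x₀ ≠ ⊤ := fun h =>
    absurd (h ▸ hkey) (EReal.coe_lt_top m).not_ge
  obtain ⟨G, hG⟩ : ∃ G : ℝ, f x₀ = (G : EReal) :=
    ⟨(f x₀).toReal, (EReal.coe_toReal hfx (hfbot x₀)).symm⟩
  have hQb : Q ≠ ⊥ := by
    have h1 := hterm x₀
    rw [hG, ← EReal.coe_sub] at h1
    exact fun h => absurd (h1.trans_eq h) (EReal.bot_lt_coe _).not_ge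
  have hQr : ((Q.toReal : ℝ) : EReal) = Q := EReal.coe_toReal hne hQb
  rcases le_total (qQ br x₀) Q.toReal with hc | hc
  · rw [hmdef, max_eq_right hc, hQr] at hkey
    exact hkey
  · rw [hmdef, max_eq_left hc] at hkey
    have hfq : f x₀ = ((qQ br x₀ : ℝ) : EReal) := le_antisymm hkey (hq x₀)
    have h1 := hterm x₀
    rw [hfq, ← EReal.coe_sub] at h1
    have h2 : br x₀ x₀ - qQ br x₀ = qQ br x₀ := by rw [qQ]; ring
    rw [h2] at h1
    rw [hfq]
    exact h1
end
end
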